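/- An element a ∈ A is an upper semi-Weyl type element (a ∈ KΦ₊⁻(A)) if and only if a = b + f for some left invertible b ∈ A and some f ∈ F. -/

import Mathlib

variable {A : Type*}

/-- An orthogonal projection in a C*-algebra. -/
def IsProjectionElem [CStarAlgebra A] (p : A) : Prop := IsSelfAdjoint p ∧ p * p = p

/-- Murray–von Neumann equivalence of projections: `p ∼ q`. -/
def MvNEquiv [CStarAlgebra A] (p q : A) : Prop := ∃ v : A, v * star v = p ∧ star v * v = q

/-- Murray–von Neumann subequivalence `p ⪯ q`: `p` is equivalent to a
subprojection of `q`. -/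
def MvNSubEquiv [CStarAlgebra A] (p q : A) : Prop :=
  ∃ p' : A, IsProjectionElem p' ∧ p' * q = p' ∧ q * p' = p' ∧ MvNEquiv p p'

/-- `a` is invertible up to the pair of projections `(p, q)`. -/
def InvertibleUpTo [CStarAlgebra A] (a p q : A) : Prop :=
  ∃ b : A, (1 - q) * a * (1 - p) * b = 1 - q ∧ b * ((1 - q) * a * (1 - p)) = 1 - p

/-- An ideal of finite type elements in a unital C*-algebra `A`
(Kečkić–Lazović): a selfadjoint (two-sided, complex-linear) ideal possessing an
approximate unit of projections, and such that for any two projections `p, q`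
in the ideal there is `v` with `v v* = q` and `v* v ⊥ p`. -/
structure FiniteTypeIdeal (A : Type*) [CStarAlgebra A] where
  carrier : Set A
  zero_mem : (0 : A) ∈ carrier
  add_mem : ∀ {a b : A}, a ∈ carrier → b ∈ carrier → a + b ∈ carrier
  smul_mem : ∀ (c : ℂ) {a : A}, a ∈ carrier → c • a ∈ carrier
  mul_mem_left : ∀ (a : A) {b : A}, b ∈ carrier → a * b ∈ carrier
  mul_mem_right : ∀ (a : A) {b : A}, b ∈ carrier → b * a ∈ carrier
  star_mem : ∀ {a : A}, a ∈ carrier → star a ∈ carrier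
  approx_unit : ∀ {a : A}, a ∈ carrier → ∀ ε : ℝ, 0 < ε →
    ∃ p ∈ carrier, IsProjectionElem p ∧ ‖a * p - a‖ < ε ∧ ‖p * a - a‖ < ε
  exchange : ∀ {p q : A}, p ∈ carrier → q ∈ carrier →
    IsProjectionElem p → IsProjectionElem q →
    ∃ v : A, v * star v = q ∧ IsProjectionElem (star v * v + p)

variable [CStarAlgebra A]

/-- Upper semi-Fredholm type elements `KΦ₊(A)`. -/
def UpperSemiFredholm (F : FiniteTypeIdeal A) (a : A) : Prop :=
  ∃ p q : A, IsProjectionElem p ∧ IsProjectionElem q ∧ p ∈ F.carrier ∧ InvertibleUpTo a p q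

/-- Lower semi-Fredholm type elements `KΦ₋(A)`. -/
def LowerSemiFredholm (F : FiniteTypeIdeal A) (a : A) : Prop :=
  ∃ p q : A, IsProjectionElem p ∧ IsProjectionElem q ∧ q ∈ F.carrier ∧ InvertibleUpTo a p q

/-- Fredholm type elements `KΦ(A)`. -/
def FredholmType (F : FiniteTypeIdeal A) (a : A) : Prop :=
  ∃ p q : A, IsProjectionElem p ∧ IsProjectionElem q ∧ p ∈ F.carrier ∧ q ∈ F.carrier ∧
    InvertibleUpTo a p q

/-- Upper semi-Weyl type elements `KΦ₊⁻(A)`. -/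
def UpperSemiWeyl (F : FiniteTypeIdeal A) (a : A) : Prop :=
  ∃ p q : A, IsProjectionElem p ∧ IsProjectionElem q ∧ p ∈ F.carrier ∧ MvNSubEquiv p q ∧
    InvertibleUpTo a p q

/-- Lower semi-Weyl type elements `KΦ₋⁺(A)`. -/
def LowerSemiWeyl (F : FiniteTypeIdeal A) (a : A) : Prop :=
  ∃ p q : A, IsProjectionElem p ∧ IsProjectionElem q ∧ q ∈ F.carrier ∧ MvNSubEquiv q p ∧
    InvertibleUpTo a p q

/-- Weyl type elements `KΦ₀(A)`. -/
def WeylType (F : FiniteTypeIdeal A) (a : A) : Prop :=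
  ∃ p q : A, IsProjectionElem p ∧ IsProjectionElem q ∧ p ∈ F.carrier ∧ q ∈ F.carrier ∧
    MvNEquiv p q ∧ InvertibleUpTo a p q

private lemma commute_cfc_aux {x b : A} (hx : IsSelfAdjoint x) (h : Commute b x) (f : ℝ → ℝ) :
    Commute b (cfc f x) := by
  refine cfc_cases (fun y => Commute b y) x f (Commute.zero_right _) fun hf _ => ?_
  have key : ∀ g : C(spectrum ℝ x, ℝ), Commute b (cfcHom hx g) := by
    intro g
    induction g using ContinuousMap.induction_on_of_compact with
    | const r =>
        have : (ContinuousMap.const (spectrum ℝ x) r) = algebraMap ℝ C(spectrum ℝ x, ℝ) r := rfl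
        rw [this, AlgHomClass.commutes]
        exact Algebra.commute_algebraMap_right r b
    | id => rw [cfcHom_id hx]; exact h
    | star_id => rw [star_trivial, cfcHom_id hx]; exact h
    | add f g hf hg => rw [map_add]; exact hf.add_right hg
    | mul f g hf hg => rw [map_mul]; exact hf.mul_right hg
    | frequently f hf =>
        have hcont : Continuous (cfcHom hx (R := ℝ)) := cfcHom_isClosedEmbedding hx |>.continuous
        have hc : IsClosed {g : C(spectrum ℝ x, ℝ) | Commute b (cfcHom hx g)} :=
          isClosed_eq (by fun_prop) (by fun_prop)
        exact hc.mem_of_frequently_of_tendsto hf Filter.tendsto_id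
  exact key _

private lemma star_unit_inv_eq {y : A} (hy : star y = y) (u : Aˣ) (hu : (u : A) = y) :
    star (↑u⁻¹ : A) = ↑u⁻¹ := by
  have h2 : y * ↑u⁻¹ = 1 := by rw [← hu]; exact u.mul_inv
  have h3 : star (↑u⁻¹ : A) * y = 1 := by
    have := congrArg star h2
    rwa [star_mul, star_one, hy] at this
  calc star (↑u⁻¹ : A) = star (↑u⁻¹ : A) * (y * ↑u⁻¹) := by rw [h2, mul_one]
    _ = (star (↑u⁻¹ : A) * y) * ↑u⁻¹ := by rw [mul_assoc]
    _ = ↑u⁻¹ := by rw [h3, one_mul]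

private lemma isUnit_of_smul_one_le [PartialOrder A] [StarOrderedRing A] {β : ℝ} (hβ : 0 < β)
    {y : A} (h : β • (1 : A) ≤ y) : IsUnit y := by
  have h0 : IsUnit (β • (1 : A)) :=
    ⟨⟨β • 1, β⁻¹ • 1, by rw [smul_mul_smul_comm, mul_inv_cancel₀ hβ.ne', one_mul, one_smul],
      by rw [smul_mul_smul_comm, inv_mul_cancel₀ hβ.ne', one_mul, one_smul]⟩, rfl⟩
  exact CStarAlgebra.isUnit_of_le _ h (And.intro (smul_nonneg hβ.le zero_le_one) h0)

private lemma mvn_of_alg_equiv [PartialOrder A] [StarOrderedRing A]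
    {p r u t : A} (hpsa : star p = p) (hpp : p * p = p)
    (hrsa : star r = r) (hrr : r * r = r)
    (htu : t * u = p) (hut : u * t = r) (hup : u * p = u) (hru : r * u = u) :
    ∃ v : A, v * star v = p ∧ star v * v = r := by
  by_cases hp0 : p = 0
  · refine ⟨0, by simp [hp0], ?_⟩
    have hu0 : u = 0 := by rw [← hup, hp0, mul_zero]
    rw [← hut, hu0, zero_mul]; simp
  · have ht0 : t ≠ 0 := by rintro rfl; rw [zero_mul] at htu; exact hp0 htu.symm
    set γ : ℝ := ‖t‖ ^ 2 with hγdef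
    have hγ : 0 < γ := by rw [hγdef]; exact pow_pos (norm_pos_iff.mpr ht0) 2
    set uu := star u * u with huu
    have huusa : star uu = uu := by rw [huu, star_mul, star_star]
    have huup : uu * p = uu := by rw [huu, mul_assoc, hup]
    have hpuu : p * uu = uu := by
      have := congrArg star huup; rwa [star_mul, huusa, hpsa] at this
    have h1pp : (1 - p) * (1 - p) = 1 - p := by
      rw [mul_sub, mul_one, sub_mul, one_mul, hpp]; abel
    have h1psa : star (1 - p : A) = 1 - p := by rw [star_sub, star_one, hpsa]
    have hp_nonneg : (0 : A) ≤ p := by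
      have := star_mul_self_nonneg p; rwa [hpsa, hpp] at this
    have h1p_nonneg : (0 : A) ≤ 1 - p := by
      have := star_mul_self_nonneg (1 - p); rwa [h1psa, h1pp] at this
    have hkey : p ≤ γ • uu := by
      have h1 : star t * t ≤ algebraMap ℝ A γ := CStarAlgebra.star_mul_le_algebraMap_norm_sq
      have h2 : star u * (star t * t) * u ≤ star u * (algebraMap ℝ A γ) * u :=
        star_left_conjugate_le_conjugate h1 u
      have h3 : star u * (star t * t) * u = p := by
        have : star u * (star t * t) * u = star (t * u) * (t * u) := by
          rw [star_mul]; simp only [mul_assoc]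
        rw [this, htu, hpsa, hpp]
      have h4 : star u * (algebraMap ℝ A γ) * u = γ • uu := by
        rw [Algebra.algebraMap_eq_smul_one, mul_smul_comm, mul_one, smul_mul_assoc, huu]
      rw [h3, h4] at h2; exact h2
    have huu_ge : γ⁻¹ • p ≤ uu := by
      have := smul_le_smul_of_nonneg_left hkey (inv_nonneg.mpr hγ.le)
      rwa [smul_smul, inv_mul_cancel₀ hγ.ne', one_smul] at this
    set x := uu + (1 - p) with hxdef
    have hxle : (min γ⁻¹ 1) • (1 : A) ≤ x := by
      calc (min γ⁻¹ 1) • (1 : A) = (min γ⁻¹ 1) • p + (min γ⁻¹ 1) • (1 - p) := by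
            rw [← smul_add]; congr 1; abel
        _ ≤ γ⁻¹ • p + (1 : ℝ) • (1 - p) :=
            add_le_add (smul_le_smul_of_nonneg_right (min_le_left _ _) hp_nonneg)
              (smul_le_smul_of_nonneg_right (min_le_right _ _) h1p_nonneg)
        _ = γ⁻¹ • p + (1 - p) := by rw [one_smul]
        _ ≤ uu + (1 - p) := add_le_add huu_ge le_rfl
    have hxu : IsUnit x := isUnit_of_smul_one_le (lt_min (by positivity) one_pos) hxle
    obtain ⟨X, hX⟩ := hxu
    set i : A := ↑X⁻¹ with hidef
    have hiX : i * x = 1 := by rw [hidef, ← hX]; exact X.inv_mul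
    have hXi : x * i = 1 := by rw [hidef, ← hX]; exact X.mul_inv
    have hxsa : star x = x := by rw [hxdef, star_add, huusa, h1psa]
    have hisa : star i = i := star_unit_inv_eq hxsa X hX
    have huu1p : uu * (1 - p) = 0 := by rw [mul_sub, mul_one, huup, sub_self]
    have h1puu : (1 - p) * uu = 0 := by rw [sub_mul, one_mul, hpuu, sub_self]
    have hx1p : x * (1 - p) = 1 - p := by rw [hxdef, add_mul, huu1p, h1pp, zero_add]
    have h1px : (1 - p) * x = 1 - p := by rw [hxdef, mul_add, h1puu, h1pp, zero_add]
    have hxp : x * p = uu := by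
      rw [hxdef, add_mul, huup, sub_mul, one_mul, hpp, sub_self, add_zero]
    have hpx : p * x = uu := by
      rw [hxdef, mul_add, hpuu, mul_sub, mul_one, hpp, sub_self, add_zero]
    have hi1p : i * (1 - p) = 1 - p := by
      calc i * (1 - p) = i * (x * (1 - p)) := by rw [hx1p]
        _ = (i * x) * (1 - p) := by rw [mul_assoc]
        _ = 1 - p := by rw [hiX, one_mul]
    have h1pi : (1 - p) * i = 1 - p := by
      calc (1 - p) * i = ((1 - p) * x) * i := by rw [h1px]
        _ = (1 - p) * (x * i) := by rw [mul_assoc]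
        _ = 1 - p := by rw [hXi, mul_one]
    have huu_eq : uu = x - (1 - p) := by rw [hxdef]; abel
    have hiuu : i * uu = p := by
      rw [huu_eq, mul_sub, hiX, hi1p]; abel
    have huui : uu * i = p := by
      rw [huu_eq, sub_mul, hXi, h1pi]; abel
    have hcomm_px : Commute p x := by
      rw [Commute, SemiconjBy, hpx, hxp]
    have hcomm_uux : Commute uu x := by
      rw [Commute, SemiconjBy, hxdef, mul_add, add_mul, huu1p, h1puu]
    have hxnn : (0 : A) ≤ x :=
      le_trans (smul_nonneg (le_of_lt (lt_min (by positivity) one_pos)) zero_le_one) hxle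
    have hXu : IsUnit x := ⟨X, hX⟩
    have hspec : ∀ s ∈ spectrum ℝ x, 0 < s := by
      intro s hs
      have h1 : 0 ≤ s := spectrum_nonneg_of_nonneg hxnn hs
      have h2 : s ≠ 0 := by
        rintro rfl; exact (spectrum.zero_notMem_iff ℝ).mpr hXu hs
      exact lt_of_le_of_ne h1 (Ne.symm h2)
    have hcont : ContinuousOn (fun s : ℝ => (Real.sqrt s)⁻¹) (spectrum ℝ x) :=
      ContinuousOn.inv₀ Real.continuous_sqrt.continuousOn
        (fun s hs => (Real.sqrt_pos.mpr (hspec s hs)).ne')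
    set sq : A := cfc (fun s : ℝ => (Real.sqrt s)⁻¹) x with hsqdef
    have hxsa' : IsSelfAdjoint x := hxsa
    have hsqsa : IsSelfAdjoint sq := by rw [hsqdef]; exact cfc_predicate _ x
    have hsq2 : sq * sq = i := by
      rw [hsqdef, ← cfc_mul _ _ x hcont hcont]
      have h5 : cfc (fun s : ℝ => (Real.sqrt s)⁻¹ * (Real.sqrt s)⁻¹) x
          = cfc (fun s : ℝ => s⁻¹) x :=
        cfc_congr (fun s hs => by
          rw [← mul_inv, Real.mul_self_sqrt (hspec s hs).le])
      rw [h5]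
      have h6 : cfc (fun s : ℝ => s⁻¹) ((X : A)) = ↑X⁻¹ := cfc_inv_id X (by rw [hX]; exact hxsa')
      rw [hX] at h6
      rw [h6, hidef]
    have hsq_p : Commute p sq := commute_cfc_aux hxsa' hcomm_px _
    have hsq_uu : Commute uu sq := commute_cfc_aux hxsa' hcomm_uux _
    have hstar_v : star (sq * star u) = u * sq := by
      rw [star_mul, star_star, hsqsa.star_eq]
    refine ⟨sq * star u, ?_, ?_⟩
    · rw [hstar_v]
      calc (sq * star u) * (u * sq) = sq * (uu * sq) := by rw [huu]; simp only [mul_assoc]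
        _ = sq * (sq * uu) := by rw [hsq_uu.eq]
        _ = (sq * sq) * uu := by rw [mul_assoc]
        _ = i * uu := by rw [hsq2]
        _ = p := hiuu
    · rw [hstar_v]
      have hk : (u * sq) * (sq * star u) = u * (i * star u) := by
        calc (u * sq) * (sq * star u) = u * ((sq * sq) * star u) := by simp only [mul_assoc]
          _ = u * (i * star u) := by rw [hsq2]
      rw [hk]
      have hsur : star u * r = star u := by
        have := congrArg star hru; rwa [star_mul, hrsa] at this
      have hku : (u * (i * star u)) * u = u := by
        calc (u * (i * star u)) * u = u * (i * (star u * u)) := by simp only [mul_assoc]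
          _ = u * (i * uu) := by rw [huu]
          _ = u * p := by rw [hiuu]
          _ = u := hup
      have hkr : (u * (i * star u)) * r = u * (i * star u) := by
        calc (u * (i * star u)) * r = u * (i * (star u * r)) := by simp only [mul_assoc]
          _ = u * (i * star u) := by rw [hsur]
      calc u * (i * star u) = (u * (i * star u)) * r := hkr.symm
        _ = (u * (i * star u)) * (u * t) := by rw [hut]
        _ = ((u * (i * star u)) * u) * t := by simp only [mul_assoc]
        _ = u * t := by rw [hku]
        _ = r := hut

/-- Proposition 17(1) of [BJMA]: `a` is an upper semi-Weyl type element iff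
`a = b + f` with `b` left invertible and `f` of finite type. -/
theorem upperSemiWeyl_iff_leftInvertible_plus_finite (F : FiniteTypeIdeal A) (a : A) :
    UpperSemiWeyl F a ↔
      ∃ b f : A, (∃ c : A, c * b = 1) ∧ f ∈ F.carrier ∧ a = b + f := by
  constructor
  · intro h
    obtain ⟨p, q, hp, hq, hpF, ⟨p', hp', hp'q, hqp', v, hvv, hvv'⟩, b₀, hb₀1, hb₀2⟩ := h
    have hpp := hp.2
    have hp'p' := hp'.2
    have hvp' : v * p' = v := by
      have hz : star (v * p' - v) * (v * p' - v) = 0 := by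
        have expand : star (v * p' - v) * (v * p' - v)
            = p' * (star v * v) * p' - p' * (star v * v) - (star v * v) * p' + star v * v := by
          rw [star_sub, star_mul, hp'.1.star_eq]
          noncomm_ring
        rw [expand, hvv', hp'p', hp'p']
        abel
      have := (CStarRing.star_mul_self_eq_zero_iff _).mp hz
      exact sub_eq_zero.mp this
    have hpv : p * v = v := by
      calc p * v = (v * star v) * v := by rw [hvv]
        _ = v * (star v * v) := by rw [mul_assoc]
        _ = v * p' := by rw [hvv']
        _ = v := hvp'
    have hsvp' : p' * star v = star v := by
      have := congrArg star hvp'; rwa [star_mul, hp'.1.star_eq] at this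
    have h1qsv : (1 - q) * star v = 0 := by
      calc (1 - q) * star v = (1 - q) * (p' * star v) := by rw [hsvp']
        _ = ((1 - q) * p') * star v := by rw [mul_assoc]
        _ = 0 := by rw [sub_mul, one_mul, hqp', sub_self, zero_mul]
    have h1pv : (1 - p) * v = 0 := by rw [sub_mul, one_mul, hpv, sub_self]
    have h1pp : (1 - p) * (1 - p) = 1 - p := by
      rw [mul_sub, mul_one, sub_mul, one_mul, hpp]; abel
    have hvF : star v ∈ F.carrier := by
      have h1 : p * v ∈ F.carrier := F.mul_mem_right v hpF
      rw [hpv] at h1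
      exact F.star_mem h1
    refine ⟨a * (1 - p) + star v, a * p - star v,
      ⟨(1 - v * a * (1 - p)) * ((1 - p) * b₀ * (1 - q) + v), ?_⟩, ?_, by noncomm_ring⟩
    · have t1 : ((1 - p) * b₀ * (1 - q)) * (a * (1 - p)) = 1 - p := by
        calc ((1 - p) * b₀ * (1 - q)) * (a * (1 - p))
            = (1 - p) * (b₀ * ((1 - q) * a * (1 - p))) := by simp only [mul_assoc]
          _ = (1 - p) * (1 - p) := by rw [hb₀2]
          _ = 1 - p := h1pp
      have t2 : ((1 - p) * b₀ * (1 - q)) * star v = 0 := by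
        calc ((1 - p) * b₀ * (1 - q)) * star v
            = (1 - p) * (b₀ * ((1 - q) * star v)) := by simp only [mul_assoc]
          _ = 0 := by rw [h1qsv, mul_zero, mul_zero]
      have step1 : ((1 - p) * b₀ * (1 - q) + v) * (a * (1 - p) + star v)
          = 1 + v * (a * (1 - p)) := by
        calc ((1 - p) * b₀ * (1 - q) + v) * (a * (1 - p) + star v)
            = ((1 - p) * b₀ * (1 - q)) * (a * (1 - p)) + ((1 - p) * b₀ * (1 - q)) * star v
              + v * (a * (1 - p)) + v * star v := by noncomm_ring
          _ = (1 - p) + 0 + v * (a * (1 - p)) + p := by rw [t1, t2, hvv]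
          _ = 1 + v * (a * (1 - p)) := by abel
      have hnil : (v * (a * (1 - p))) * (v * (a * (1 - p))) = 0 := by
        calc (v * (a * (1 - p))) * (v * (a * (1 - p)))
            = v * (a * (((1 - p) * v) * (a * (1 - p)))) := by simp only [mul_assoc]
          _ = 0 := by rw [h1pv, zero_mul, mul_zero, mul_zero]
      have hw : v * a * (1 - p) = v * (a * (1 - p)) := by rw [mul_assoc]
      rw [mul_assoc, step1, hw]
      have expand2 : (1 - v * (a * (1 - p))) * (1 + v * (a * (1 - p)))
          = 1 - (v * (a * (1 - p))) * (v * (a * (1 - p))) := by noncomm_ring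
      rw [expand2, hnil, sub_zero]
    · have h1 : a * p ∈ F.carrier := F.mul_mem_left a hpF
      have h2 : a * p - star v = a * p + (-1 : ℂ) • star v := by
        rw [neg_one_smul, sub_eq_add_neg]
      rw [h2]
      exact F.add_mem h1 (F.smul_mem _ hvF)
  · intro h
    obtain ⟨b, f, ⟨c, hcb⟩, hfF, hab⟩ := h
    by_cases htriv : Subsingleton A
    · have h0 : ∀ z w : A, z = w := fun z w => Subsingleton.elim z w
      exact ⟨0, 0, ⟨h0 _ _, h0 _ _⟩, ⟨h0 _ _, h0 _ _⟩, F.zero_mem,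
        ⟨0, ⟨h0 _ _, h0 _ _⟩, h0 _ _, h0 _ _, 0, h0 _ _, h0 _ _⟩, 0, h0 _ _, h0 _ _⟩
    haveI : Nontrivial A := not_subsingleton_iff_nontrivial.mp htriv
    letI : PartialOrder A := CStarAlgebra.spectralOrder A
    letI : StarOrderedRing A := CStarAlgebra.spectralOrderedRing A
    have hεpos : 0 < (‖c‖ + 1)⁻¹ := by positivity
    obtain ⟨p, hpF, hpProj, hfp, -⟩ := F.approx_unit hfF _ hεpos
    obtain ⟨hpsa', hpp⟩ := hpProj
    have hpsa : star p = p := hpsa'.star_eq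
    have hp1sa : star (1 - p : A) = 1 - p := by rw [star_sub, star_one, hpsa]
    have hp1p1 : (1 - p : A) * (1 - p) = 1 - p := by
      rw [mul_sub, mul_one, sub_mul, one_mul, hpp]; abel
    have hpp1 : p * (1 - p) = 0 := by rw [mul_sub, mul_one, hpp, sub_self]
    have hp1p : (1 - p : A) * p = 0 := by rw [sub_mul, one_mul, hpp, sub_self]
    have hp_nn : (0 : A) ≤ p := by
      have := star_mul_self_nonneg p; rwa [hpsa, hpp] at this
    have hp1_nn : (0 : A) ≤ 1 - p := by
      have := star_mul_self_nonneg (1 - p : A); rwa [hp1sa, hp1p1] at this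
    obtain ⟨d, hddef⟩ : ∃ d : A, d = b + f * (1 - p) := ⟨_, rfl⟩
    have hdp1 : d * (1 - p) = a * (1 - p) := by
      rw [hddef, hab, add_mul, add_mul, mul_assoc, hp1p1]
    have hcd : c * d = 1 + c * (f * (1 - p)) := by rw [hddef, mul_add, hcb]
    have hnorm : ‖c * (f * (1 - p))‖ < 1 := by
      have h1 : ‖f * (1 - p)‖ < (‖c‖ + 1)⁻¹ := by
        have h2 : f * (1 - p) = -(f * p - f) := by rw [mul_sub, mul_one, neg_sub]
        rw [h2, norm_neg]; exact hfp
      calc ‖c * (f * (1 - p))‖ ≤ ‖c‖ * ‖f * (1 - p)‖ := norm_mul_le _ _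
        _ ≤ ‖c‖ * (‖c‖ + 1)⁻¹ := mul_le_mul_of_nonneg_left h1.le (norm_nonneg c)
        _ < 1 := by
            rw [← div_eq_mul_inv]
            exact (div_lt_one (by positivity)).mpr (lt_add_one _)
    have hu : IsUnit (c * d) := by
      rw [hcd, show (1 : A) + c * (f * (1 - p)) = 1 - -(c * (f * (1 - p))) from by
        rw [sub_neg_eq_add]]
      exact (Units.oneSub _ (by rwa [norm_neg])).isUnit
    obtain ⟨U, hU⟩ := hu
    obtain ⟨c', hc'def⟩ : ∃ c' : A, c' = ↑U⁻¹ * c := ⟨_, rfl⟩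
    have hc'd : c' * d = 1 := by
      rw [hc'def, mul_assoc, ← hU]; exact U.inv_mul
    have hc'0 : c' ≠ 0 := by
      intro h0
      exact one_ne_zero (α := A) (by rw [← hc'd, h0, zero_mul])
    have hc'pos : 0 < ‖c'‖ ^ 2 := pow_pos (norm_pos_iff.mpr hc'0) 2
    have hβ : 0 < (‖c'‖ ^ 2)⁻¹ := inv_pos.mpr hc'pos
    have hdd_ge : (‖c'‖ ^ 2)⁻¹ • (1 : A) ≤ star d * d := by
      have h1 : (1 : A) = star d * (star c' * c') * d := by
        have h2 : star (c' * d) * (c' * d) = 1 := by rw [hc'd, star_one, one_mul]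
        rw [← h2, star_mul]; simp only [mul_assoc]
      have h3 : star d * (star c' * c') * d ≤ star d * (algebraMap ℝ A (‖c'‖ ^ 2)) * d :=
        star_left_conjugate_le_conjugate CStarAlgebra.star_mul_le_algebraMap_norm_sq d
      have h4 : star d * (algebraMap ℝ A (‖c'‖ ^ 2)) * d = (‖c'‖ ^ 2) • (star d * d) := by
        rw [Algebra.algebraMap_eq_smul_one, mul_smul_comm, mul_one, smul_mul_assoc]
      have h5 : (1 : A) ≤ (‖c'‖ ^ 2) • (star d * d) := by
        rw [h1, ← h4]; exact h3
      calc (‖c'‖ ^ 2)⁻¹ • (1 : A) ≤ (‖c'‖ ^ 2)⁻¹ • ((‖c'‖ ^ 2) • (star d * d)) :=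
            smul_le_smul_of_nonneg_left h5 hβ.le
        _ = star d * d := by rw [smul_smul, inv_mul_cancel₀ hc'pos.ne', one_smul]
    obtain ⟨D, hD⟩ := isUnit_of_smul_one_le hβ hdd_ge
    obtain ⟨j, hjdef⟩ : ∃ j : A, j = ↑D⁻¹ := ⟨_, rfl⟩
    have hjd : j * (star d * d) = 1 := by rw [hjdef, ← hD]; exact D.inv_mul
    have hdj : (star d * d) * j = 1 := by rw [hjdef, ← hD]; exact D.mul_inv
    have hddsa : star (star d * d) = star d * d := by rw [star_mul, star_star]
    have hjsa : star j = j := by rw [hjdef]; exact star_unit_inv_eq hddsa D hD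
    obtain ⟨e, hedef⟩ : ∃ e : A, e = d * (j * star d) := ⟨_, rfl⟩
    have heda : e * d = d := by
      calc e * d = d * (j * (star d * d)) := by rw [hedef]; simp only [mul_assoc]
        _ = d := by rw [hjd, mul_one]
    have hesa : star e = e := by
      rw [hedef, star_mul, star_mul, star_star, hjsa, mul_assoc]
    have hee : e * e = e := by
      have hsd : star d * (d * (j * star d)) = star d := by
        calc star d * (d * (j * star d)) = ((star d * d) * j) * star d := by
              simp only [mul_assoc]
          _ = star d := by rw [hdj, one_mul]
      calc e * e = d * (j * (star d * (d * (j * star d)))) := by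
            rw [hedef]; simp only [mul_assoc]
        _ = d * (j * star d) := by rw [hsd]
        _ = e := hedef.symm
    -- the corner inverse
    obtain ⟨y, hydef⟩ : ∃ y : A, y = (1 - p) * (star d * d) * (1 - p) + p := ⟨_, rfl⟩
    have hy_ge : min (‖c'‖ ^ 2)⁻¹ 1 • (1 : A) ≤ y := by
      have c1 : (‖c'‖ ^ 2)⁻¹ • (1 - p : A) ≤ (1 - p) * (star d * d) * (1 - p) := by
        have := star_left_conjugate_le_conjugate hdd_ge (1 - p)
        rwa [hp1sa, mul_smul_comm, mul_one, smul_mul_assoc, hp1p1] at this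
      calc min (‖c'‖ ^ 2)⁻¹ 1 • (1 : A)
          = min (‖c'‖ ^ 2)⁻¹ 1 • (1 - p : A) + min (‖c'‖ ^ 2)⁻¹ 1 • p := by
            rw [← smul_add]; congr 1; abel
        _ ≤ (‖c'‖ ^ 2)⁻¹ • (1 - p : A) + (1 : ℝ) • p :=
            add_le_add (smul_le_smul_of_nonneg_right (min_le_left _ _) hp1_nn)
              (smul_le_smul_of_nonneg_right (min_le_right _ _) hp_nn)
        _ = (‖c'‖ ^ 2)⁻¹ • (1 - p : A) + p := by rw [one_smul]
        _ ≤ (1 - p) * (star d * d) * (1 - p) + p := add_le_add c1 le_rfl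
        _ = y := hydef.symm
    obtain ⟨Y, hY⟩ := isUnit_of_smul_one_le (lt_min hβ one_pos) hy_ge
    obtain ⟨iy, hiydef⟩ : ∃ iy : A, iy = ↑Y⁻¹ := ⟨_, rfl⟩
    have hiyY : iy * y = 1 := by rw [hiydef, ← hY]; exact Y.inv_mul
    have hYiy : y * iy = 1 := by rw [hiydef, ← hY]; exact Y.mul_inv
    have hysa : star y = y := by
      rw [hydef, star_add, star_mul, star_mul, hddsa, hp1sa, hpsa]; simp only [mul_assoc]
    have hiysa : star iy = iy := by rw [hiydef]; exact star_unit_inv_eq hysa Y hY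
    have hyp : y * p = p := by
      rw [hydef, add_mul, mul_assoc ((1 - p) * (star d * d)) (1 - p) p, hp1p, mul_zero, hpp,
        zero_add]
    have hpy : p * y = p := by
      have h6 : p * ((1 - p) * (star d * d) * (1 - p)) = 0 := by
        calc p * ((1 - p) * (star d * d) * (1 - p))
            = ((p * (1 - p)) * (star d * d)) * (1 - p) := by simp only [mul_assoc]
          _ = 0 := by rw [hpp1, zero_mul, zero_mul]
      rw [hydef, mul_add, h6, hpp, zero_add]
    have hiyp : iy * p = p := by
      calc iy * p = iy * (y * p) := by rw [hyp]
        _ = (iy * y) * p := by rw [mul_assoc]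
        _ = p := by rw [hiyY, one_mul]
    have hyp1 : y * (1 - p) = y - p := by rw [mul_sub, mul_one, hyp]
    have hp1y : (1 - p) * y = y - p := by rw [sub_mul, one_mul, hpy]
    have hiy_comm : iy * (1 - p) = (1 - p) * iy := by
      calc iy * (1 - p) = iy * ((1 - p) * (y * iy)) := by rw [hYiy, mul_one]
        _ = iy * (((1 - p) * y) * iy) := by rw [mul_assoc]
        _ = iy * ((y * (1 - p)) * iy) := by rw [hp1y, ← hyp1]
        _ = (iy * y) * ((1 - p) * iy) := by simp only [mul_assoc]
        _ = (1 - p) * iy := by rw [hiyY, one_mul]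
    obtain ⟨h, hhdef⟩ : ∃ h : A, h = (1 - p) * iy := ⟨_, rfl⟩
    have hhsa : star h = h := by
      rw [hhdef, star_mul, hiysa, hp1sa]; exact hiy_comm
    have hp1h : (1 - p) * h = h := by rw [hhdef, ← mul_assoc, hp1p1]
    have hhp1 : h * (1 - p) = h := by
      rw [hhdef, mul_assoc, hiy_comm, ← mul_assoc, hp1p1]
    have hph : p * h = 0 := by rw [hhdef, ← mul_assoc, hpp1, zero_mul]
    have hhp : h * p = 0 := by rw [hhdef, mul_assoc, hiyp, hp1p]
    have hyp8 : (1 - p) * (star d * d) * (1 - p) = y - p := by rw [hydef]; abel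
    have hcor1 : h * ((1 - p) * (star d * d) * (1 - p)) = 1 - p := by
      rw [hyp8, mul_sub, hhp, sub_zero, hhdef, mul_assoc, hiyY, mul_one]
    have hcor2 : ((1 - p) * (star d * d) * (1 - p)) * h = 1 - p := by
      rw [hyp8, sub_mul, hph, sub_zero]
      calc y * h = (y * (1 - p)) * iy := by rw [hhdef, mul_assoc]
        _ = ((1 - p) * y) * iy := by rw [hyp1, ← hp1y]
        _ = (1 - p) * (y * iy) := by rw [mul_assoc]
        _ = 1 - p := by rw [hYiy, mul_one]
    have hA1 : h * (star d * (d * (1 - p))) = 1 - p := by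
      calc h * (star d * (d * (1 - p)))
          = (h * (1 - p)) * (star d * (d * (1 - p))) := by rw [hhp1]
        _ = h * ((1 - p) * (star d * d) * (1 - p)) := by simp only [mul_assoc]
        _ = 1 - p := hcor1
    have hB : h * (star d * (d * h)) = h := by
      calc h * (star d * (d * h))
          = (h * (1 - p)) * (star d * (d * ((1 - p) * h))) := by rw [hp1h, hhp1]
        _ = h * (((1 - p) * (star d * d) * (1 - p)) * h) := by simp only [mul_assoc]
        _ = h * (1 - p) := by rw [hcor2]
        _ = h := hhp1
    obtain ⟨e1, he1def⟩ : ∃ e1 : A, e1 = d * (h * star d) := ⟨_, rfl⟩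
    have he1sa : star e1 = e1 := by
      rw [he1def, star_mul, star_mul, star_star, hhsa, mul_assoc]
    have he1e1 : e1 * e1 = e1 := by
      calc e1 * e1 = d * ((h * (star d * (d * h))) * star d) := by
            rw [he1def]; simp only [mul_assoc]
        _ = d * (h * star d) := by rw [hB]
        _ = e1 := he1def.symm
    have he1dp1 : e1 * (d * (1 - p)) = d * (1 - p) := by
      calc e1 * (d * (1 - p)) = d * (h * (star d * (d * (1 - p)))) := by
            rw [he1def]; simp only [mul_assoc]
        _ = d * (1 - p) := by rw [hA1]
    have hee1 : e * e1 = e1 := by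
      calc e * e1 = (e * d) * (h * star d) := by rw [he1def, mul_assoc]
        _ = d * (h * star d) := by rw [heda]
        _ = e1 := he1def.symm
    have he1e : e1 * e = e1 := by
      have := congrArg star hee1; rwa [star_mul, hesa, he1sa] at this
    -- the projections r = e - e1 and q = 1 - e1
    have hrsa : star (e - e1) = e - e1 := by rw [star_sub, hesa, he1sa]
    have hrr : (e - e1) * (e - e1) = e - e1 := by
      rw [mul_sub, sub_mul, sub_mul, hee, hee1, he1e, he1e1]; abel
    -- u and t for the partial isometry
    have h7a : (j * star d) * (d * p) = p := by
      calc (j * star d) * (d * p) = (j * (star d * d)) * p := by simp only [mul_assoc]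
        _ = p := by rw [hjd, one_mul]
    have h7b : (j * star d) * (e1 * (d * p)) = h * (star d * (d * p)) := by
      calc (j * star d) * (e1 * (d * p))
          = ((j * (star d * d)) * h) * (star d * (d * p)) := by
            rw [he1def]; simp only [mul_assoc]
        _ = h * (star d * (d * p)) := by rw [hjd, one_mul]
    have hre : (e - e1) * ((e - e1) * (d * p)) = (e - e1) * (d * p) := by
      rw [← mul_assoc, hrr]
    have htu : (p * (j * star d) * (e - e1)) * ((e - e1) * (d * p)) = p := by
      have step : (j * star d) * ((e - e1) * (d * p)) = p - h * (star d * (d * p)) := by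
        have e_dp : e * (d * p) = d * p := by rw [← mul_assoc, heda]
        rw [sub_mul, mul_sub, e_dp, h7a, h7b]
      calc (p * (j * star d) * (e - e1)) * ((e - e1) * (d * p))
          = p * ((j * star d) * ((e - e1) * ((e - e1) * (d * p)))) := by simp only [mul_assoc]
        _ = p * ((j * star d) * ((e - e1) * (d * p))) := by rw [hre]
        _ = p * (p - h * (star d * (d * p))) := by rw [step]
        _ = p * p - (p * h) * (star d * (d * p)) := by rw [mul_sub, mul_assoc]
        _ = p := by rw [hpp, hph, zero_mul, sub_zero]
    have hut : ((e - e1) * (d * p)) * (p * (j * star d) * (e - e1)) = e - e1 := by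
      have hre2 : (e - e1) * e = e - e1 := by rw [sub_mul, hee, he1e]
      have hrdp1 : (e - e1) * (d * (1 - p)) = 0 := by
        rw [sub_mul, he1dp1, ← mul_assoc, heda, sub_self]
      have hdpg : (d * p) * (j * star d) = e - (d * (1 - p)) * (j * star d) := by
        have : d * p = d - d * (1 - p) := by rw [mul_sub, mul_one]; abel
        rw [this, sub_mul, hedef]
      calc ((e - e1) * (d * p)) * (p * (j * star d) * (e - e1))
          = (e - e1) * (((d * (p * p)) * (j * star d)) * (e - e1)) := by simp only [mul_assoc]
        _ = (e - e1) * (((d * p) * (j * star d)) * (e - e1)) := by rw [hpp]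
        _ = (e - e1) * ((e - (d * (1 - p)) * (j * star d)) * (e - e1)) := by rw [hdpg]
        _ = ((e - e1) * e) * (e - e1)
            - ((e - e1) * (d * (1 - p))) * ((j * star d) * (e - e1)) := by
              noncomm_ring
        _ = (e - e1) * (e - e1) - 0 := by rw [hre2, hrdp1, zero_mul]
        _ = e - e1 := by rw [hrr, sub_zero]
    have hup : ((e - e1) * (d * p)) * p = (e - e1) * (d * p) := by
      rw [mul_assoc, mul_assoc, hpp]
    have hru : (e - e1) * ((e - e1) * (d * p)) = (e - e1) * (d * p) := hre
    obtain ⟨v, hvv, hvv'⟩ := mvn_of_alg_equiv hpsa hpp hrsa hrr htu hut hup hru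
    -- assemble
    have hq1sa : star (1 - e1 : A) = 1 - e1 := by rw [star_sub, star_one, he1sa]
    have hq1q1 : (1 - e1 : A) * (1 - e1) = 1 - e1 := by
      rw [mul_sub, mul_one, sub_mul, one_mul, he1e1]; abel
    have hr_q : (e - e1) * (1 - e1) = e - e1 := by
      rw [mul_sub, mul_one, sub_mul, hee1, he1e1, sub_self, sub_zero]
    have hq_r : (1 - e1) * (e - e1) = e - e1 := by
      rw [sub_mul, one_mul, mul_sub, he1e, he1e1, sub_self, sub_zero]
    refine ⟨p, 1 - e1, ⟨hpsa', hpp⟩, ⟨hq1sa, hq1q1⟩, hpF,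
      ⟨e - e1, ⟨hrsa, hrr⟩, hr_q, hq_r, v, hvv, hvv'⟩, h * star d, ?_, ?_⟩
    · have hqq : (1 : A) - (1 - e1) = e1 := by abel
      rw [hqq]
      calc e1 * a * (1 - p) * (h * star d)
          = e1 * (a * (1 - p)) * (h * star d) := by rw [mul_assoc e1 a (1 - p)]
        _ = e1 * (d * (1 - p)) * (h * star d) := by rw [hdp1]
        _ = (d * (1 - p)) * (h * star d) := by rw [he1dp1]
        _ = d * (((1 - p) * h) * star d) := by simp only [mul_assoc]
        _ = d * (h * star d) := by rw [hp1h]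
        _ = e1 := he1def.symm
    · have hqq : (1 : A) - (1 - e1) = e1 := by abel
      rw [hqq]
      calc (h * star d) * (e1 * a * (1 - p))
          = (h * star d) * (e1 * (a * (1 - p))) := by rw [mul_assoc e1 a (1 - p)]
        _ = (h * star d) * (e1 * (d * (1 - p))) := by rw [hdp1]
        _ = (h * star d) * (d * (1 - p)) := by rw [he1dp1]
        _ = h * (star d * (d * (1 - p))) := by simp only [mul_assoc]
        _ = 1 - p := hA1
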